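/- Let Φ ⊆ X be a nonempty subset with diameter D(Φ) = max_{u,v∈Φ} d(u,v) > 0, let Y ⊆ X be a nonempty reporting range, let ε ≥ 0, and define the exponential mechanism f(x'|x) = exp(−ε·d(x,x')/(2D(Φ))) / Σ_{t∈Y} exp(−ε·d(x,t)/(2D(Φ))) for x ∈ Φ and x' ∈ Y. Then f is (ε_g, D(Φ))-geo-indistinguishable within Φ with ε_g = ε/(2D(Φ)): for all x, y ∈ Φ and all x' ∈ Y, f(x'|x)/f(x'|y) ≤ exp(ε_g·(d(x,y) + D(Φ))). -/

import Mathlib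

open Finset Real

/-- Let Φ be a nonempty subset of X with diameter D > 0, Y a nonempty
reporting range, ε ≥ 0, and let f be the exponential mechanism
f(x'|x) = exp(−ε·d(x,x')/(2D)) / Σ_{t∈Y} exp(−ε·d(x,t)/(2D)). Then f is
(ε_g, D)-geo-indistinguishable within Φ with ε_g = ε/(2D):
f(x'|x)/f(x'|y) ≤ exp(ε_g·(d(x,y) + D)) for x, y ∈ Φ, x' ∈ Y. -/
theorem stmt_8 {X : Type*} [Fintype X] [Nonempty X] [MetricSpace X]
    (Φ : Finset X) (hΦ : Φ.Nonempty)
    (D : ℝ) (hDpos : 0 < D)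
    (hDub : ∀ u ∈ Φ, ∀ v ∈ Φ, dist u v ≤ D)
    (hDmem : ∃ u ∈ Φ, ∃ v ∈ Φ, dist u v = D)
    (Y : Finset X) (hY : Y.Nonempty)
    (ε : ℝ) (hε : 0 ≤ ε) :
    ∀ x ∈ Φ, ∀ y ∈ Φ, ∀ x' ∈ Y,
      (Real.exp (-(ε * dist x x') / (2 * D)) /
          ∑ t ∈ Y, Real.exp (-(ε * dist x t) / (2 * D))) /
        (Real.exp (-(ε * dist y x') / (2 * D)) /
          ∑ t ∈ Y, Real.exp (-(ε * dist y t) / (2 * D))) ≤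
      Real.exp ((ε / (2 * D)) * (dist x y + D)) := by
  intro x hx y hy x' hx'
  set c : ℝ := ε / (2 * D) with hc
  have hc0 : 0 ≤ c := div_nonneg hε (by linarith)
  have hSpos : ∀ u : X, 0 < ∑ t ∈ Y, Real.exp (-(ε * dist u t) / (2 * D)) := by
    intro u
    exact Finset.sum_pos (fun t _ => Real.exp_pos _) hY
  set Sx := ∑ t ∈ Y, Real.exp (-(ε * dist x t) / (2 * D)) with hSx
  set Sy := ∑ t ∈ Y, Real.exp (-(ε * dist y t) / (2 * D)) with hSy
  have hSxpos := hSpos x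
  have hSypos := hSpos y
  rw [div_div_div_comm]
  have h1 : Real.exp (-(ε * dist x x') / (2 * D)) / Real.exp (-(ε * dist y x') / (2 * D))
      ≤ Real.exp (c * dist x y) := by
    rw [← Real.exp_sub]
    apply Real.exp_le_exp.2
    have htri : dist y x' - dist x x' ≤ dist x y := by
      have := dist_triangle y x x'
      have h := dist_comm x y
      linarith [dist_triangle y x x', dist_comm y x ▸ le_refl (dist y x)]
    have : -(ε * dist x x') / (2 * D) - -(ε * dist y x') / (2 * D)
        = c * (dist y x' - dist x x') := by
      rw [hc]; ring
    rw [this]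
    have : dist y x' - dist x x' ≤ dist x y := by
      have := dist_triangle y x x'
      rw [dist_comm y x] at this
      linarith
    exact mul_le_mul_of_nonneg_left this hc0
  have h2 : Sy / Sx ≤ Real.exp (c * dist x y) := by
    rw [div_le_iff₀ hSxpos]
    calc Sy ≤ ∑ t ∈ Y, Real.exp (c * dist x y) * Real.exp (-(ε * dist x t) / (2 * D)) := by
          apply Finset.sum_le_sum
          intro t _
          rw [← Real.exp_add]
          apply Real.exp_le_exp.2
          have htri : dist y t ≥ dist x t - dist x y := by
            have := dist_triangle x y t
            linarith
          have heq : c * dist x y + -(ε * dist x t) / (2 * D)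
              = c * (dist x y - dist x t) := by
            rw [hc]; ring
          have heq2 : -(ε * dist y t) / (2 * D) = -(c * dist y t) := by
            rw [hc]; ring
          rw [heq, heq2]
          nlinarith [mul_le_mul_of_nonneg_left htri hc0]
      _ = Real.exp (c * dist x y) * Sx := by rw [← Finset.mul_sum]
  have hfin : Real.exp (c * dist x y) * Real.exp (c * dist x y)
      ≤ Real.exp (c * (dist x y + D)) := by
    rw [← Real.exp_add]
    apply Real.exp_le_exp.2
    have hdxy : dist x y ≤ D := hDub x hx y hy
    nlinarith
  calc (Real.exp (-(ε * dist x x') / (2 * D)) / Real.exp (-(ε * dist y x') / (2 * D))) / (Sx / Sy)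
      = (Real.exp (-(ε * dist x x') / (2 * D)) / Real.exp (-(ε * dist y x') / (2 * D))) * (Sy / Sx) := by
        have hA := (Real.exp_pos (-(ε * dist y x') / (2 * D))).ne'
        field_simp
    _ ≤ Real.exp (c * dist x y) * Real.exp (c * dist x y) := by
        exact mul_le_mul h1 h2 (by positivity) (Real.exp_pos _).le
    _ ≤ Real.exp (c * (dist x y + D)) := hfin
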